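/- Let H ⊆ ℝⁿ be a nonempty finite union of closed boxes ∏_{i=1}^n [a_i, b_i], and let M₁,…,M_m : ℝⁿ → ℝ be functions that are multilinear in the coordinates, i.e. each M_i is affine in each coordinate x_j when the other coordinates are fixed. Then conv{(x, M₁(x),…,M_m(x)) : x ∈ H} = conv{(v, M₁(v),…,M_m(v)) : v ∈ corner(H)}. -/

import Mathlib

/-- `M : ℝⁿ → ℝ` is multilinear in the coordinates: fixing all coordinates except the
`i`-th yields an affine function of the `i`-th coordinate. -/
def IsCoordinatewiseMultilinear {N : ℕ} (M : (Fin N → ℝ) → ℝ) : Prop :=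
  ∀ (i : Fin N) (x : Fin N → ℝ),
    ∃ c d : ℝ, ∀ y : ℝ, M (Function.update x i y) = c * y + d

/-- The corner points of `H ⊆ ℝⁿ`: points of `H` each of whose coordinates is an extreme
point of the convex hull of the corresponding axis-parallel slice of `H`. -/
def piCornerSet {N : ℕ} (H : Set (Fin N → ℝ)) : Set (Fin N → ℝ) :=
  {v | v ∈ H ∧ ∀ i, v i ∈ Set.extremePoints ℝ
    (convexHull ℝ {y : ℝ | Function.update v i y ∈ H})}

open Set Function

namespace CornerAux

variable {N : ℕ}

/-- grid values in coordinate `i` -/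
noncomputable def Gset (R : Finset ((Fin N → ℝ) × (Fin N → ℝ))) (i : Fin N) : Finset ℝ :=
  R.image (fun r => r.1 i) ∪ R.image (fun r => r.2 i)

lemma slice_lemma {H : Set (Fin N → ℝ)} {R : Finset ((Fin N → ℝ) × (Fin N → ℝ))}
    (hR : ∀ r ∈ R, r.1 ≤ r.2) (hH : H = ⋃ r ∈ R, Set.Icc r.1 r.2)
    {z : Fin N → ℝ} (hz : z ∈ H) (i : Fin N) :
    ∃ α β : ℝ, IsLeast {y | Function.update z i y ∈ H} α ∧
      IsGreatest {y | Function.update z i y ∈ H} β ∧ α ∈ Gset R i ∧ β ∈ Gset R i := by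
  set S := {y | Function.update z i y ∈ H} with hS
  have hzS : z i ∈ S := by
    show Function.update z i (z i) ∈ H
    rw [Function.update_eq_self]; exact hz
  have hSne : S.Nonempty := ⟨z i, hzS⟩
  have hHcl : IsClosed H := by
    rw [hH]; exact R.finite_toSet.isClosed_biUnion fun r _ => isClosed_Icc
  have hScl : IsClosed S := hHcl.preimage (continuous_const.update i continuous_id)
  have hsub : S ⊆ ⋃ r ∈ (R : Set ((Fin N → ℝ) × (Fin N → ℝ))), Set.Icc (r.1 i) (r.2 i) := by
    intro y hy
    have : Function.update z i y ∈ H := hy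
    rw [hH] at this
    obtain ⟨r, hrR, hrm⟩ := Set.mem_iUnion₂.1 this
    refine Set.mem_iUnion₂.2 ⟨r, hrR, ?_, ?_⟩
    · simpa using hrm.1 i
    · simpa using hrm.2 i
  have hbdd : BddBelow S ∧ BddAbove S := by
    constructor
    · refine BddBelow.mono hsub ?_
      rw [R.finite_toSet.bddBelow_biUnion]
      exact fun r _ => bddBelow_Icc
    · refine BddAbove.mono hsub ?_
      rw [R.finite_toSet.bddAbove_biUnion]
      exact fun r _ => bddAbove_Icc
  have hαS : sInf S ∈ S := hScl.csInf_mem hSne hbdd.1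
  have hβS : sSup S ∈ S := hScl.csSup_mem hSne hbdd.2
  refine ⟨sInf S, sSup S, ⟨hαS, fun y hy => csInf_le hbdd.1 hy⟩,
    ⟨hβS, fun y hy => le_csSup hbdd.2 hy⟩, ?_, ?_⟩
  · -- sInf S ∈ Gset
    have : Function.update z i (sInf S) ∈ H := hαS
    rw [hH] at this
    obtain ⟨r, hrR, hrm⟩ := Set.mem_iUnion₂.1 this
    have hr1S : r.1 i ∈ S := by
      show Function.update z i (r.1 i) ∈ H
      rw [hH]
      refine Set.mem_iUnion₂.2 ⟨r, hrR, ?_, ?_⟩ <;> intro j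
      · rcases eq_or_ne j i with h | h
        · subst h; simp
        · have := hrm.1 j; simpa [Function.update_apply, h] using this
      · rcases eq_or_ne j i with h | h
        · subst h; simpa using hR r hrR j
        · have := hrm.2 j; simpa [Function.update_apply, h] using this
    have h1 : sInf S ≤ r.1 i := csInf_le hbdd.1 hr1S
    have h2 : r.1 i ≤ sInf S := by simpa using hrm.1 i
    have : sInf S = r.1 i := le_antisymm h1 h2
    rw [this, Gset]
    exact Finset.mem_union_left _ (Finset.mem_image_of_mem _ hrR)
  · have : Function.update z i (sSup S) ∈ H := hβS
    rw [hH] at this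
    obtain ⟨r, hrR, hrm⟩ := Set.mem_iUnion₂.1 this
    have hr2S : r.2 i ∈ S := by
      show Function.update z i (r.2 i) ∈ H
      rw [hH]
      refine Set.mem_iUnion₂.2 ⟨r, hrR, ?_, ?_⟩ <;> intro j
      · rcases eq_or_ne j i with h | h
        · subst h; simpa using hR r hrR j
        · have := hrm.1 j; simpa [Function.update_apply, h] using this
      · rcases eq_or_ne j i with h | h
        · subst h; simp
        · have := hrm.2 j; simpa [Function.update_apply, h] using this
    have h1 : r.2 i ≤ sSup S := le_csSup hbdd.2 hr2S
    have h2 : sSup S ≤ r.2 i := by simpa using hrm.2 i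
    have : sSup S = r.2 i := le_antisymm h2 h1
    rw [this, Gset]
    exact Finset.mem_union_right _ (Finset.mem_image_of_mem _ hrR)

end CornerAux

namespace CornerAux

variable {N : ℕ}

lemma corner_subset_grid {H : Set (Fin N → ℝ)} {R : Finset ((Fin N → ℝ) × (Fin N → ℝ))}
    (hR : ∀ r ∈ R, r.1 ≤ r.2) (hH : H = ⋃ r ∈ R, Set.Icc r.1 r.2)
    {v : Fin N → ℝ} (hv : v ∈ piCornerSet H) (i : Fin N) : v i ∈ Gset R i := by
  obtain ⟨hvH, hext⟩ := hv
  obtain ⟨α, β, hα, hβ, hαG, hβG⟩ := slice_lemma hR hH hvH i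
  set S := {y | Function.update v i y ∈ H}
  have hviS : v i ∈ S := by
    show Function.update v i (v i) ∈ H; rw [Function.update_eq_self]; exact hvH
  rcases eq_or_lt_of_le (hα.2 hviS) with h | h1
  · rw [← h]; exact hαG
  rcases eq_or_lt_of_le (hβ.2 hviS) with h | h2
  · rw [h]; exact hβG
  exfalso
  have hmem : v i ∈ openSegment ℝ α β := by
    rw [openSegment_eq_Ioo (h1.trans h2)]; exact ⟨h1, h2⟩
  have := (hext i).2 (subset_convexHull ℝ S hα.1) (subset_convexHull ℝ S hβ.1) hmem
  exact absurd this (ne_of_lt h1)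

lemma comp_multilinear {m : ℕ} (M : Fin m → (Fin N → ℝ) → ℝ)
    (hM : ∀ k, IsCoordinatewiseMultilinear (M k))
    (L : ((Fin N → ℝ) × (Fin m → ℝ)) →L[ℝ] ℝ) :
    IsCoordinatewiseMultilinear
      (fun x => L (x, fun k : Fin m => M k x)) := by
  intro i x
  set f : (Fin N → ℝ) → (Fin N → ℝ) × (Fin m → ℝ) :=
    fun w => (w, fun k : Fin m => M k w) with hf
  have key : ∀ y : ℝ, f (Function.update x i y) =
      f (Function.update x i 0) + y • (f (Function.update x i 1) - f (Function.update x i 0)) := by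
    intro y
    refine Prod.ext ?_ ?_
    · funext j
      rcases eq_or_ne j i with h | h
      · subst h; simp [hf, Function.update_apply]
      · simp [hf, Function.update_apply, h]
    · funext k
      obtain ⟨c, d, hcd⟩ := hM k i x
      simp only [hf, Prod.snd_add, Prod.snd_sub, Pi.add_apply, Pi.sub_apply,
        Prod.smul_snd, Pi.smul_apply, smul_eq_mul]
      rw [hcd y, hcd 0, hcd 1]
      ring
  refine ⟨L (f (Function.update x i 1) - f (Function.update x i 0)),
    L (f (Function.update x i 0)), fun y => ?_⟩
  show L (f (Function.update x i y)) = _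
  rw [key y, map_add, map_smul, smul_eq_mul]
  ring

lemma sum_sq_update (z : Fin N → ℝ) (i : Fin N) (t : ℝ) :
    ∑ j, (Function.update z i t j) ^ 2 = t ^ 2 - (z i) ^ 2 + ∑ j, (z j) ^ 2 := by
  have h : (fun j => (Function.update z i t j) ^ 2) =
      Function.update (fun j => (z j) ^ 2) i (t ^ 2) := by
    funext j
    rcases eq_or_ne j i with h | h
    · subst h; simp
    · simp [Function.update_apply, h]
  rw [h, Finset.sum_update_of_mem (Finset.mem_univ i)]
  rw [← Finset.sum_erase_add Finset.univ (fun j => (z j)^2) (Finset.mem_univ i)]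
  have : Finset.univ \ {i} = Finset.univ.erase i := by
    ext j; simp [Finset.mem_erase, and_comm]
  rw [this]
  ring

lemma exists_corner_ge {H : Set (Fin N → ℝ)} {R : Finset ((Fin N → ℝ) × (Fin N → ℝ))}
    (hR : ∀ r ∈ R, r.1 ≤ r.2) (hH : H = ⋃ r ∈ R, Set.Icc r.1 r.2)
    (g : (Fin N → ℝ) → ℝ) (hg : IsCoordinatewiseMultilinear g)
    {x : Fin N → ℝ} (hx : x ∈ H) :
    ∃ v ∈ piCornerSet H, g x ≤ g v := by
  classical
  set F : Set (Fin N → ℝ) := {w | w ∈ H ∧ ∀ i, w i ∈ Gset R i} with hF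
  have hFfin : F.Finite := by
    have := Set.Finite.pi' (fun i : Fin N => (Gset R i).finite_toSet)
    exact this.subset fun w hw => hw.2
  -- Step A: push x into the grid without decreasing g
  have stepA : ∀ k : ℕ, ∃ w ∈ H, g x ≤ g w ∧ ∀ i : Fin N, (i : ℕ) < k → w i ∈ Gset R i := by
    intro k
    induction k with
    | zero => exact ⟨x, hx, le_refl _, fun i hi => absurd hi (Nat.not_lt_zero _)⟩
    | succ k ih =>
      obtain ⟨w, hwH, hgw, hcoord⟩ := ih
      by_cases hk : k < N
      · set i : Fin N := ⟨k, hk⟩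
        obtain ⟨α, β, hα, hβ, hαG, hβG⟩ := slice_lemma hR hH hwH i
        obtain ⟨c, d, hcd⟩ := hg i w
        have hwiS : w i ∈ {y | Function.update w i y ∈ H} := by
          show Function.update w i (w i) ∈ H; rw [Function.update_eq_self]; exact hwH
        have hgww : g w = c * w i + d := by
          rw [← hcd (w i), Function.update_eq_self]
        by_cases hc : 0 ≤ c
        · refine ⟨Function.update w i β, hβ.1, ?_, ?_⟩
          · rw [hcd β]
            have : c * w i ≤ c * β := mul_le_mul_of_nonneg_left (hβ.2 hwiS) hc
            linarith [hgw, hgww.symm.le]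
          · intro j hj
            rcases eq_or_ne j i with h | h
            · subst h; simpa using hβG
            · have hjk : (j : ℕ) < k := by
                have : (j : ℕ) ≠ k := fun hc' => h (Fin.ext hc')
                omega
              simpa [Function.update_apply, h] using hcoord j hjk
        · refine ⟨Function.update w i α, hα.1, ?_, ?_⟩
          · rw [hcd α]
            have : c * w i ≤ c * α :=
              mul_le_mul_of_nonpos_left (hα.2 hwiS) (le_of_not_ge hc)
            linarith [hgw, hgww.symm.le]
          · intro j hj
            rcases eq_or_ne j i with h | h
            · subst h; simpa using hαG
            · have hjk : (j : ℕ) < k := by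
                have : (j : ℕ) ≠ k := fun hc' => h (Fin.ext hc')
                omega
              simpa [Function.update_apply, h] using hcoord j hjk
      · exact ⟨w, hwH, hgw, fun i hi => hcoord i (by omega)⟩
  obtain ⟨w₀, hw₀H, hgw₀, hw₀G⟩ := stepA N
  have hw₀F : w₀ ∈ F := ⟨hw₀H, fun i => hw₀G i i.isLt⟩
  -- maximize g over F
  obtain ⟨z₀, hz₀F, hz₀max⟩ := Set.exists_max_image F g hFfin ⟨w₀, hw₀F⟩
  -- among maximizers, maximize the sum of squares
  set F₁ : Set (Fin N → ℝ) := {w | w ∈ F ∧ g z₀ ≤ g w} with hF₁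
  obtain ⟨z, hzF₁, hzmax⟩ := Set.exists_max_image F₁ (fun w => ∑ j, (w j) ^ 2)
    (hFfin.subset fun w hw => hw.1) ⟨z₀, hz₀F, le_refl _⟩
  obtain ⟨hzF, hgz0z⟩ := hzF₁
  have hgzz0 : g z = g z₀ := le_antisymm (hz₀max z hzF) hgz0z
  refine ⟨z, ⟨hzF.1, ?_⟩, le_trans hgw₀ (le_trans (hz₀max w₀ hw₀F) hgz0z)⟩
  intro i
  by_contra hne
  set S := {y | Function.update z i y ∈ H} with hSdef
  have hziS : z i ∈ S := by
    show Function.update z i (z i) ∈ H; rw [Function.update_eq_self]; exact hzF.1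
  have hzi_conv : z i ∈ convexHull ℝ S := subset_convexHull ℝ S hziS
  rw [mem_extremePoints] at hne
  push_neg at hne
  obtain ⟨x₁, hx₁, x₂, hx₂, hseg, hne12⟩ := hne hzi_conv
  obtain ⟨α, β, hα, hβ, hαG, hβG⟩ := slice_lemma hR hH hzF.1 i
  -- conv S ⊆ [α, β]
  have hconv_sub : convexHull ℝ S ⊆ Set.Icc α β :=
    convexHull_min (fun y hy => ⟨hα.2 hy, hβ.2 hy⟩) (convex_Icc α β)
  have hx₁I := hconv_sub hx₁
  have hx₂I := hconv_sub hx₂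
  -- from the open segment membership get strict bounds
  have h12 : x₁ ≠ x₂ := by
    rintro rfl
    rw [openSegment_same] at hseg
    exact hne12 hseg.symm hseg.symm
  have hlt : α < z i ∧ z i < β := by
    rw [openSegment_eq_Ioo' h12] at hseg
    constructor
    · calc α ≤ min x₁ x₂ := le_min hx₁I.1 hx₂I.1
        _ < z i := hseg.1
    · calc z i < max x₁ x₂ := hseg.2
        _ ≤ β := max_le hx₁I.2 hx₂I.2
  obtain ⟨c, d, hcd⟩ := hg i z
  have hgzc : g z = c * z i + d := by rw [← hcd (z i), Function.update_eq_self]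
  have hzαF : Function.update z i α ∈ F := by
    refine ⟨hα.1, fun j => ?_⟩
    rcases eq_or_ne j i with h | h
    · subst h; simpa using hαG
    · simpa [Function.update_apply, h] using hzF.2 j
  have hzβF : Function.update z i β ∈ F := by
    refine ⟨hβ.1, fun j => ?_⟩
    rcases eq_or_ne j i with h | h
    · subst h; simpa using hβG
    · simpa [Function.update_apply, h] using hzF.2 j
  have hgα : g (Function.update z i α) ≤ g z := (hz₀max _ hzαF).trans hgz0z
  have hgβ : g (Function.update z i β) ≤ g z := (hz₀max _ hzβF).trans hgz0z
  rw [hcd α] at hgα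
  rw [hcd β] at hgβ
  have hc0 : c = 0 := by
    rcases lt_trichotomy c 0 with h | h | h
    · nlinarith [hlt.1]
    · exact h
    · nlinarith [hlt.2]
  have hgαz : g (Function.update z i α) = g z := by rw [hcd α, hgzc, hc0]; ring
  have hgβz : g (Function.update z i β) = g z := by rw [hcd β, hgzc, hc0]; ring
  have hzα1 : Function.update z i α ∈ F₁ := ⟨hzαF, by rw [hgαz, hgzz0]⟩
  have hzβ1 : Function.update z i β ∈ F₁ := ⟨hzβF, by rw [hgβz, hgzz0]⟩
  have hqα := hzmax _ hzα1
  have hqβ := hzmax _ hzβ1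
  simp only [sum_sq_update] at hqα hqβ
  have hα2 : α ^ 2 ≤ (z i) ^ 2 := by linarith
  have hβ2 : β ^ 2 ≤ (z i) ^ 2 := by linarith
  have h1 : 0 ≤ z i + α := by
    by_contra h
    push_neg at h
    nlinarith [mul_pos (sub_pos.mpr hlt.1) (neg_pos.mpr h)]
  have h2 : z i + β ≤ 0 := by
    by_contra h
    push_neg at h
    nlinarith [mul_pos (sub_pos.mpr hlt.2) h]
  linarith [hlt.1, hlt.2]

end CornerAux

/-- Over a nonempty finite union of closed boxes `H ⊆ ℝⁿ`, the simultaneous convex hull of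
finitely many coordinatewise-multilinear functions equals the convex hull of their
simultaneous graph points over the corner points of `H`. -/
theorem simultaneous_hull_over_union_of_boxes_corner_generated
    (N : ℕ) (H : Set (Fin N → ℝ)) (hne : H.Nonempty)
    (R : Finset ((Fin N → ℝ) × (Fin N → ℝ)))
    (hR : ∀ r ∈ R, r.1 ≤ r.2)
    (hH : H = ⋃ r ∈ R, Set.Icc r.1 r.2)
    (m : ℕ) (M : Fin m → (Fin N → ℝ) → ℝ)
    (hM : ∀ i, IsCoordinatewiseMultilinear (M i)) :
    convexHull ℝ ((fun x : Fin N → ℝ => (x, fun i : Fin m => M i x)) '' H) =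
      convexHull ℝ
        ((fun v : Fin N → ℝ => (v, fun i : Fin m => M i v)) '' piCornerSet H) := by
  classical
  set f : (Fin N → ℝ) → (Fin N → ℝ) × (Fin m → ℝ) :=
    fun x => (x, fun i : Fin m => M i x) with hf
  apply Set.Subset.antisymm
  · apply convexHull_min ?_ (convex_convexHull ℝ _)
    rintro p ⟨x, hxH, rfl⟩
    by_contra hnot
    have hcornerF : (f '' piCornerSet H).Finite := by
      have hfin : (piCornerSet H).Finite := by
        have := Set.Finite.pi' (fun i : Fin N => (CornerAux.Gset R i).finite_toSet)
        exact this.subset fun v hv i => CornerAux.corner_subset_grid hR hH hv i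
      exact hfin.image f
    have hclosed : IsClosed (convexHull ℝ (f '' piCornerSet H)) :=
      hcornerF.isClosed_convexHull (𝕜 := ℝ)
    obtain ⟨L, u, hLlt, hLgt⟩ :=
      geometric_hahn_banach_closed_point (convex_convexHull ℝ _) hclosed hnot
    obtain ⟨v, hv, hgv⟩ := CornerAux.exists_corner_ge hR hH (fun w => L (f w))
      (CornerAux.comp_multilinear M hM L) hxH
    have hvC : L (f v) < u := hLlt _ (subset_convexHull ℝ _ ⟨v, hv, rfl⟩)
    have hxv : L (f x) ≤ L (f v) := hgv
    linarith
  · exact convexHull_mono (Set.image_mono fun v hv => hv.1)
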